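/- arXiv:gr-qc/0211037 — 2 statements merged into one kernel-verified Lean document; each statement's English description precedes it below -/
import Mathlib

section
/- Let $\mathcal{X}, \mathcal{Y}$ be Banach spaces and $Q_\varepsilon : \mathcal{X} \to \mathcal{Y}$, $\varepsilon \in [0,1]$, a continuous (in operator norm) family of bounded linear operators which is uniformly injective, i.e. there exists $C > 0$ independent of $\varepsilon$ with $\|Q_\varepsilon(y)\| \geq C\|y\|$ for all $y$. Suppose $\mathcal{C}$ is a finite-dimensional linear subspace of $\mathcal{Y}$ with $\mathcal{C} \cap \mathrm{Im}(Q_0) = \{0\}$, and assume each $Q_\varepsilon$ has closed image. Then there exists $\varepsilon_0 > 0$ such that $\mathcal{C} \cap \mathrm{Im}(Q_\varepsilon) = \{0\}$ for all $\varepsilon < \varepsilon_0$. -/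
open Metric

/-- Separation of a finite-dimensional subspace from a closed subspace meeting it trivially. -/
lemma cokernel_sep {Y : Type*} [NormedAddCommGroup Y] [NormedSpace ℝ Y]
    (M : Submodule ℝ Y) (hM : IsClosed (M : Set Y))
    (𝒞 : Submodule ℝ Y) [FiniteDimensional ℝ 𝒞]
    (hdis : ∀ c ∈ 𝒞, c ∈ M → c = (0 : Y)) :
    ∃ δ > (0 : ℝ), ∀ c ∈ 𝒞, ∀ m ∈ M, δ * ‖c‖ ≤ ‖c - m‖ := by
  by_cases hbot : ∀ c ∈ 𝒞, c = (0 : Y)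
  · refine ⟨1, one_pos, fun c hc m hm => ?_⟩
    simp [hbot c hc]
  · push_neg at hbot
    obtain ⟨c₀, hc₀, hc₀ne⟩ := hbot
    set S : Set Y := Subtype.val '' (Metric.sphere (0 : 𝒞) 1) with hS
    have hScomp : IsCompact S := (isCompact_sphere (0 : 𝒞) 1).image continuous_subtype_val
    have hSne : S.Nonempty := by
      refine ⟨‖c₀‖⁻¹ • c₀, ⟨⟨‖c₀‖⁻¹ • c₀, 𝒞.smul_mem _ hc₀⟩, ?_, rfl⟩⟩
      simp only [mem_sphere_iff_norm, sub_zero]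
      rw [show ‖(⟨‖c₀‖⁻¹ • c₀, _⟩ : 𝒞)‖ = ‖‖c₀‖⁻¹ • c₀‖ from rfl, norm_smul, norm_inv,
        norm_norm, inv_mul_cancel₀ (norm_ne_zero_iff.2 hc₀ne)]
    obtain ⟨c, hcS, hmin⟩ := hScomp.exists_isMinOn hSne
      ((continuous_infDist_pt (M : Set Y)).continuousOn)
    have hc𝒞 : c ∈ 𝒞 := by
      obtain ⟨⟨c', hc'⟩, -, rfl⟩ := hcS
      exact hc'
    have hcnorm : ‖c‖ = 1 := by
      obtain ⟨⟨c', hc'⟩, hsp, rfl⟩ := hcS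
      simpa using hsp
    have hδpos : 0 < infDist c (M : Set Y) := by
      rw [← (hM.notMem_iff_infDist_pos ⟨0, M.zero_mem⟩)]
      intro hmem
      have := hdis c hc𝒞 hmem
      rw [this] at hcnorm; simp at hcnorm
    refine ⟨infDist c (M : Set Y), hδpos, fun c' hc' m hm => ?_⟩
    rcases eq_or_ne c' 0 with rfl | hne
    · simpa using infDist_le_dist_of_mem (x := c') hm |>.trans' (by simp)
    · have hn : (0 : ℝ) < ‖c'‖ := norm_pos_iff.2 hne
      set u : Y := ‖c'‖⁻¹ • c' with hu
      have hu𝒞 : u ∈ 𝒞 := 𝒞.smul_mem _ hc'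
      have hun : ‖u‖ = 1 := by
        rw [hu, norm_smul, norm_inv, norm_norm, inv_mul_cancel₀ hn.ne']
      have huS : u ∈ S := ⟨⟨u, hu𝒞⟩, by simpa [mem_sphere_iff_norm] using hun, rfl⟩
      have h1 : infDist c (M : Set Y) ≤ infDist u (M : Set Y) := hmin huS
      have h2 : infDist u (M : Set Y) ≤ ‖u - ‖c'‖⁻¹ • m‖ := by
        have := infDist_le_dist_of_mem (x := u) (M.smul_mem ‖c'‖⁻¹ hm)
        simpa [dist_eq_norm] using this
      have h3 : ‖u - ‖c'‖⁻¹ • m‖ = ‖c'‖⁻¹ * ‖c' - m‖ := by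
        rw [hu, ← smul_sub, norm_smul, norm_inv, norm_norm]
      have : infDist c (M : Set Y) ≤ ‖c'‖⁻¹ * ‖c' - m‖ := h1.trans (h2.trans_eq h3)
      calc infDist c (M : Set Y) * ‖c'‖ ≤ (‖c'‖⁻¹ * ‖c' - m‖) * ‖c'‖ := by
            exact mul_le_mul_of_nonneg_right this hn.le
        _ = ‖c' - m‖ := by field_simp

/-- **Stability of co-kernels** (Proposition 2.2).  Let `Q ε`, `ε ∈ [0,1]`, be a family of
bounded linear operators between Banach spaces `X` and `Y`, continuous in the operator norm,
uniformly injective (`C‖x‖ ≤ ‖Q ε x‖` with `C` independent of `ε`), and with closed images.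
If the finite-dimensional subspace `𝒞 ⊆ Y` meets the image of `Q 0` only in `0`, then the same
holds for `Q ε` for all sufficiently small `ε`. -/
theorem cokernel_stability
    {X Y : Type*} [NormedAddCommGroup X] [NormedSpace ℝ X] [CompleteSpace X]
    [NormedAddCommGroup Y] [NormedSpace ℝ Y] [CompleteSpace Y]
    (Q : ℝ → X →L[ℝ] Y)
    (hcont : ContinuousOn Q (Set.Icc (0 : ℝ) 1))
    (C : ℝ) (hC : 0 < C)
    (hinj : ∀ ε ∈ Set.Icc (0 : ℝ) 1, ∀ x : X, C * ‖x‖ ≤ ‖Q ε x‖)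
    (hclosed : ∀ ε ∈ Set.Icc (0 : ℝ) 1, IsClosed (Set.range (Q ε)))
    (𝒞 : Submodule ℝ Y) (hfin : FiniteDimensional ℝ 𝒞)
    (h0 : 𝒞 ⊓ LinearMap.range (Q 0 : X →ₗ[ℝ] Y) = ⊥) :
    ∃ ε₀ > (0 : ℝ), ∀ ε ∈ Set.Icc (0 : ℝ) 1, ε < ε₀ →
      𝒞 ⊓ LinearMap.range (Q ε : X →ₗ[ℝ] Y) = ⊥ := by
  have h01 : (0 : ℝ) ∈ Set.Icc (0 : ℝ) 1 := ⟨le_refl _, zero_le_one⟩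
  have hM : IsClosed ((LinearMap.range (Q 0 : X →ₗ[ℝ] Y) : Submodule ℝ Y) : Set Y) := by
    have h := hclosed 0 h01
    have : ((LinearMap.range (Q 0 : X →ₗ[ℝ] Y) : Submodule ℝ Y) : Set Y) = Set.range (Q 0) := by
      ext y; simp [LinearMap.mem_range, Set.mem_range]
    rw [this]; exact h
  have hdis : ∀ c ∈ 𝒞, c ∈ LinearMap.range (Q 0 : X →ₗ[ℝ] Y) → c = (0 : Y) := by
    intro c hc hm
    have : c ∈ 𝒞 ⊓ LinearMap.range (Q 0 : X →ₗ[ℝ] Y) := ⟨hc, hm⟩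
    rw [h0] at this
    simpa using this
  obtain ⟨δ, hδ, hsep⟩ := cokernel_sep (LinearMap.range (Q 0 : X →ₗ[ℝ] Y)) hM 𝒞 hdis
  -- continuity at 0
  have hcw : ContinuousWithinAt Q (Set.Icc (0 : ℝ) 1) 0 := hcont 0 h01
  rw [Metric.continuousWithinAt_iff] at hcw
  obtain ⟨ε₀, hε₀, hsmall⟩ := hcw (C * δ) (by positivity)
  refine ⟨ε₀, hε₀, fun ε hε hεlt => ?_⟩
  rw [eq_bot_iff]
  rintro c ⟨hc𝒞, x, rfl⟩
  simp only [Submodule.mem_bot]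
  by_contra hne
  have hxne : x ≠ 0 := by rintro rfl; simp at hne
  have hxpos : (0 : ℝ) < ‖x‖ := norm_pos_iff.2 hxne
  have hQ : dist (Q ε) (Q 0) < C * δ := by
    apply hsmall hε
    rw [Real.dist_eq, sub_zero, abs_of_nonneg hε.1]
    exact hεlt
  have key : ‖Q ε x - Q 0 x‖ ≤ ‖Q ε - Q 0‖ * ‖x‖ := by
    simpa using (Q ε - Q 0).le_opNorm x
  have h1 : δ * ‖Q ε x‖ ≤ ‖Q ε x - Q 0 x‖ :=
    hsep _ hc𝒞 _ (LinearMap.mem_range_self _ x)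
  have h2 : ‖Q ε - Q 0‖ * ‖x‖ < (C * δ) * ‖x‖ := by
    apply mul_lt_mul_of_pos_right _ hxpos
    rwa [dist_eq_norm] at hQ
  have h3 : C * ‖x‖ ≤ ‖Q ε x‖ := hinj ε hε x
  have : δ * (C * ‖x‖) ≤ δ * ‖Q ε x‖ := mul_le_mul_of_nonneg_left h3 hδ.le
  have : δ * (C * ‖x‖) < (C * δ) * ‖x‖ := lt_of_le_of_lt (this.trans (h1.trans key)) h2
  nlinarith
end

section
/- Fix a nonzero covector $\xi \in \mathbb{R}^3 \setminus \{0\}$. Consider the linear map sending a pair $(F, A)$, where $F$ is a trace-free symmetric 2-tensor and $A$ is a covector on $\mathbb{R}^3$, to the pair consisting of the symmetric trace-free 2-tensor $\varepsilon^e{}_{cb} \xi^c F_{ae} + \varepsilon^e{}_{ca} \xi^c F_{be} - \xi_a A_b - \xi_b A_a + \tfrac{2}{3} \xi^c A_c \delta_{ab}$ and the covector $\xi^b F_{ab} + \varepsilon^{bc}{}_a \xi_b A_c$. Then this map is a linear isomorphism (injective, hence bijective between 8-dimensional spaces). -/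
noncomputable section
open scoped BigOperators
open MeasureTheory Real

/-- Points of `ℝ³`. -/
abbrev Pt := Fin 3 → ℝ

/-- Partial derivative of a (possibly vector-valued) function in the `i`-th coordinate
direction. -/
def pder {F : Type*} [NormedAddCommGroup F] [NormedSpace ℝ F]
    (i : Fin 3) (f : Pt → F) (x : Pt) : F :=
  fderiv ℝ f x (Pi.single i 1)

/-- The alternating (permutation) symbol on three indices. -/
def epsSym (a b c : Fin 3) : ℝ :=
  (((b : ℕ) : ℝ) - ((a : ℕ) : ℝ)) * (((c : ℕ) : ℝ) - ((b : ℕ) : ℝ)) *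
    (((c : ℕ) : ℝ) - ((a : ℕ) : ℝ)) / 2

/-- Kronecker delta. -/
def kd (a b : Fin 3) : ℝ := if a = b then 1 else 0

/-- Symmetry of a 2-tensor. -/
def sym2 (T : Fin 3 → Fin 3 → ℝ) : Prop := ∀ a b, T a b = T b a


/-- First component of the symbol map: the symmetric trace-free 2-tensor
`ε^e{}_{cb} ξ^c F_{ae} + ε^e{}_{ca} ξ^c F_{be} - ξ_a A_b - ξ_b A_a + ⅔ ξ^c A_c δ_{ab}`. -/
def symb1 (ξ : Fin 3 → ℝ) (F : Fin 3 → Fin 3 → ℝ) (A : Fin 3 → ℝ) (a b : Fin 3) : ℝ :=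
  (∑ e, ∑ c, epsSym e c b * ξ c * F a e) + (∑ e, ∑ c, epsSym e c a * ξ c * F b e)
    - ξ a * A b - ξ b * A a + (2 / 3) * (∑ c, ξ c * A c) * kd a b

/-- Second component of the symbol map: the covector `ξ^b F_{ab} + ε^{bc}{}_a ξ_b A_c`. -/
def symb2 (ξ : Fin 3 → ℝ) (F : Fin 3 → Fin 3 → ℝ) (A : Fin 3 → ℝ) (a : Fin 3) : ℝ :=
  (∑ b, ξ b * F a b) + ∑ b, ∑ c, epsSym b c a * ξ b * A c

set_option maxHeartbeats 1600000 in
set_option linter.unusedVariables false in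
lemma finmk_two : ∀ (h : (2:ℕ) < 3), ((⟨2, h⟩ : Fin 3)) = (2 : Fin 3) := fun _ => rfl
lemma finmk_zero : ∀ (h : (0:ℕ) < 3), ((⟨0, h⟩ : Fin 3)) = (0 : Fin 3) := fun _ => rfl
lemma finmk_one : ∀ (h : (1:ℕ) < 3), ((⟨1, h⟩ : Fin 3)) = (1 : Fin 3) := fun _ => rfl

set_option maxHeartbeats 1600000 in
set_option linter.unusedVariables false in
/-- **Ellipticity of the symbol of `𝒫`** (Proposition in Section 4.2): for any nonzero
covector `ξ`, the linear map `(F, A) ↦ (symb1, symb2)` on (trace-free symmetric 2-tensors) ×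
(covectors) is a linear isomorphism: it is injective, hence bijective between 8-dimensional
spaces. -/
theorem symbol_isomorphism (ξ : Fin 3 → ℝ) (hξ : ξ ≠ 0) :
    (∀ (F F' : Fin 3 → Fin 3 → ℝ) (A A' : Fin 3 → ℝ),
      sym2 F → (∑ a, F a a) = 0 → sym2 F' → (∑ a, F' a a) = 0 →
      (∀ a b, symb1 ξ F A a b = symb1 ξ F' A' a b) →
      (∀ a, symb2 ξ F A a = symb2 ξ F' A' a) → F = F' ∧ A = A') ∧
    (∀ (G : Fin 3 → Fin 3 → ℝ) (B : Fin 3 → ℝ), sym2 G → (∑ a, G a a) = 0 →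
      ∃ (F : Fin 3 → Fin 3 → ℝ) (A : Fin 3 → ℝ), sym2 F ∧ (∑ a, F a a) = 0 ∧
        (∀ a b, symb1 ξ F A a b = G a b) ∧ ∀ a, symb2 ξ F A a = B a) := by
  have hs : (ξ 0)^2 + (ξ 1)^2 + (ξ 2)^2 ≠ 0 := by
    intro h
    apply hξ
    have h0 : ξ 0 = 0 := by nlinarith [sq_nonneg (ξ 0), sq_nonneg (ξ 1), sq_nonneg (ξ 2)]
    have h1 : ξ 1 = 0 := by nlinarith [sq_nonneg (ξ 0), sq_nonneg (ξ 1), sq_nonneg (ξ 2)]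
    have h2 : ξ 2 = 0 := by nlinarith [sq_nonneg (ξ 0), sq_nonneg (ξ 1), sq_nonneg (ξ 2)]
    funext i
    fin_cases i <;> simpa using by first | exact h0 | exact h1 | exact h2
  have hcancel : ∀ x y : ℝ, ((ξ 0)^2 + (ξ 1)^2 + (ξ 2)^2)^2 * x = ((ξ 0)^2 + (ξ 1)^2 + (ξ 2)^2)^2 * y → x = y :=
    fun x y h => mul_left_cancel₀ (pow_ne_zero 2 hs) h
  constructor
  · intro F F' A A' hF htF hF' htF' h1 h2
    have d10 : F 1 0 = F 0 1 := hF 1 0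
    have d20 : F 2 0 = F 0 2 := hF 2 0
    have d21 : F 2 1 = F 1 2 := hF 2 1
    have d22 : F 2 2 = -F 0 0 - F 1 1 := by
      simp only [Fin.sum_univ_three] at htF; linarith
    have d10' : F' 1 0 = F' 0 1 := hF' 1 0
    have d20' : F' 2 0 = F' 0 2 := hF' 2 0
    have d21' : F' 2 1 = F' 1 2 := hF' 2 1
    have d22' : F' 2 2 = -F' 0 0 - F' 1 1 := by
      simp only [Fin.sum_univ_three] at htF'; linarith
    have e00 := h1 0 0
    have e01 := h1 0 1
    have e02 := h1 0 2
    have e11 := h1 1 1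
    have e12 := h1 1 2
    have k0 := h2 0
    have k1 := h2 1
    have k2 := h2 2
    simp only [symb1, symb2, epsSym, kd, Fin.sum_univ_three] at e00 e01 e02 e11 e12 k0 k1 k2
    norm_num [Fin.ext_iff, d10, d20, d21, d22, d10', d20', d21', d22'] at e00 e01 e02 e11 e12 k0 k1 k2
    have hf00 : ((ξ 0)^2 + (ξ 1)^2 + (ξ 2)^2)^2 * (F 0 0) = ((ξ 0)^2 + (ξ 1)^2 + (ξ 2)^2)^2 * (F' 0 0) := by
      linear_combination ((-1/2 : ℝ)*(ξ 0)*(ξ 1)*(ξ 2)) * e00 + ((-1/2 : ℝ)*(ξ 2)*(ξ 2)*(ξ 2) + (-1/2 : ℝ)*(ξ 1)*(ξ 1)*(ξ 2) + (-1 : ℝ)*(ξ 0)*(ξ 0)*(ξ 2)) * e01 + ((1/2 : ℝ)*(ξ 1)*(ξ 2)*(ξ 2) + (1/2 : ℝ)*(ξ 1)*(ξ 1)*(ξ 1) + (1 : ℝ)*(ξ 0)*(ξ 0)*(ξ 1)) * e02 + ((-1 : ℝ)*(ξ 0)*(ξ 1)*(ξ 2)) * e11 + ((-1/2 : ℝ)*(ξ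 0)*(ξ 2)*(ξ 2) + (1/2 : ℝ)*(ξ 0)*(ξ 1)*(ξ 1)) * e12 + ((1/2 : ℝ)*(ξ 0)*(ξ 2)*(ξ 2) + (1/2 : ℝ)*(ξ 0)*(ξ 1)*(ξ 1) + (1 : ℝ)*(ξ 0)*(ξ 0)*(ξ 0)) * k0 + ((-1/2 : ℝ)*(ξ 1)*(ξ 2)*(ξ 2) + (-1/2 : ℝ)*(ξ 1)*(ξ 1)*(ξ 1)) * k1 + ((-1/2 : ℝ)*(ξ 2)*(ξ 2)*(ξ 2) + (-1/2 : ℝ)*(ξ 1)*(ξ 1)*(ξ 2)) * k2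
    have hf01 : ((ξ 0)^2 + (ξ 1)^2 + (ξ 2)^2)^2 * (F 0 1) = ((ξ 0)^2 + (ξ 1)^2 + (ξ 2)^2)^2 * (F' 0 1) := by
      linear_combination ((1/4 : ℝ)*(ξ 2)*(ξ 2)*(ξ 2) + (3/4 : ℝ)*(ξ 0)*(ξ 0)*(ξ 2)) * e00 + ((-1/2 : ℝ)*(ξ 0)*(ξ 0)*(ξ 0)) * e02 + ((-1/4 : ℝ)*(ξ 2)*(ξ 2)*(ξ 2) + (-3/4 : ℝ)*(ξ 1)*(ξ 1)*(ξ 2)) * e11 + ((1/2 : ℝ)*(ξ 1)*(ξ 1)*(ξ 1)) * e12 + ((1/2 : ℝ)*(ξ 1)*(ξ 2)*(ξ 2) + (1/2 : ℝ)*(ξ 1)*(ξ 1)*(ξ 1) + (1 : ℝ)*(ξ 0)*(ξ 0)*(ξ 1)) * k0 + ((1/2 : ℝ)*(ξ 0)*(ξ 2)*(ξ 2) + (1 : ℝ)*(ξ 0)*(ξ 1)*(ξ 1) + (1/2 : ℝ)*(ξ 0)*(ξ 0)*(ξ 0)) * k1 + ((1/2 : ℝ)*(ξ 0)*(ξ 1)*(ξ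 2)) * k2
    have hf02 : ((ξ 0)^2 + (ξ 1)^2 + (ξ 2)^2)^2 * (F 0 2) = ((ξ 0)^2 + (ξ 1)^2 + (ξ 2)^2)^2 * (F' 0 2) := by
      linear_combination ((-3/4 : ℝ)*(ξ 1)*(ξ 2)*(ξ 2) + (-1/2 : ℝ)*(ξ 1)*(ξ 1)*(ξ 1) + (-3/4 : ℝ)*(ξ 0)*(ξ 0)*(ξ 1)) * e00 + ((1/2 : ℝ)*(ξ 0)*(ξ 0)*(ξ 0)) * e01 + ((-3/4 : ℝ)*(ξ 1)*(ξ 2)*(ξ 2) + (-1/4 : ℝ)*(ξ 1)*(ξ 1)*(ξ 1)) * e11 + ((-1/2 : ℝ)*(ξ 2)*(ξ 2)*(ξ 2)) * e12 + ((1/2 : ℝ)*(ξ 2)*(ξ 2)*(ξ 2) + (1/2 : ℝ)*(ξ 1)*(ξ 1)*(ξ 2) + (1 : ℝ)*(ξ 0)*(ξ 0)*(ξ 2)) * k0 + ((1/2 : ℝ)*(ξ 0)*(ξ 1)*(ξ 2)) * k1 + ((1 : ℝ)*(ξ 0)*(ξ 2)*(ξ 2) + (1/2 : ℝ)*(ξ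 0)*(ξ 1)*(ξ 1) + (1/2 : ℝ)*(ξ 0)*(ξ 0)*(ξ 0)) * k2
    have hf11 : ((ξ 0)^2 + (ξ 1)^2 + (ξ 2)^2)^2 * (F 1 1) = ((ξ 0)^2 + (ξ 1)^2 + (ξ 2)^2)^2 * (F' 1 1) := by
      linear_combination ((1 : ℝ)*(ξ 0)*(ξ 1)*(ξ 2)) * e00 + ((1/2 : ℝ)*(ξ 2)*(ξ 2)*(ξ 2) + (1 : ℝ)*(ξ 1)*(ξ 1)*(ξ 2) + (1/2 : ℝ)*(ξ 0)*(ξ 0)*(ξ 2)) * e01 + ((1/2 : ℝ)*(ξ 1)*(ξ 2)*(ξ 2) + (-1/2 : ℝ)*(ξ 0)*(ξ 0)*(ξ 1)) * e02 + ((1/2 : ℝ)*(ξ 0)*(ξ 1)*(ξ 2)) * e11 + ((-1/2 : ℝ)*(ξ 0)*(ξ 2)*(ξ 2) + (-1 : ℝ)*(ξ 0)*(ξ 1)*(ξ 1) + (-1/2 : ℝ)*(ξ 0)*(ξ 0)*(ξ 0)) * e12 + ((-1/2 : ℝ)*(ξ 0)*(ξ 2)*(ξ 2) + (-1/2 : ℝ)*(ξ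 0)*(ξ 0)*(ξ 0)) * k0 + ((1/2 : ℝ)*(ξ 1)*(ξ 2)*(ξ 2) + (1 : ℝ)*(ξ 1)*(ξ 1)*(ξ 1) + (1/2 : ℝ)*(ξ 0)*(ξ 0)*(ξ 1)) * k1 + ((-1/2 : ℝ)*(ξ 2)*(ξ 2)*(ξ 2) + (-1/2 : ℝ)*(ξ 0)*(ξ 0)*(ξ 2)) * k2
    have hf12 : ((ξ 0)^2 + (ξ 1)^2 + (ξ 2)^2)^2 * (F 1 2) = ((ξ 0)^2 + (ξ 1)^2 + (ξ 2)^2)^2 * (F' 1 2) := by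
      linear_combination ((3/4 : ℝ)*(ξ 0)*(ξ 2)*(ξ 2) + (1/4 : ℝ)*(ξ 0)*(ξ 0)*(ξ 0)) * e00 + ((-1/2 : ℝ)*(ξ 1)*(ξ 1)*(ξ 1)) * e01 + ((1/2 : ℝ)*(ξ 2)*(ξ 2)*(ξ 2)) * e02 + ((3/4 : ℝ)*(ξ 0)*(ξ 2)*(ξ 2) + (3/4 : ℝ)*(ξ 0)*(ξ 1)*(ξ 1) + (1/2 : ℝ)*(ξ 0)*(ξ 0)*(ξ 0)) * e11 + ((1/2 : ℝ)*(ξ 0)*(ξ 1)*(ξ 2)) * k0 + ((1/2 : ℝ)*(ξ 2)*(ξ 2)*(ξ 2) + (1 : ℝ)*(ξ 1)*(ξ 1)*(ξ 2) + (1/2 : ℝ)*(ξ 0)*(ξ 0)*(ξ 2)) * k1 + ((1 : ℝ)*(ξ 1)*(ξ 2)*(ξ 2) + (1/2 : ℝ)*(ξ 1)*(ξ 1)*(ξ 1) + (1/2 : ℝ)*(ξ 0)*(ξ 0)*(ξ 1)) * k2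
    have ha0 : ((ξ 0)^2 + (ξ 1)^2 + (ξ 2)^2)^2 * (A 0) = ((ξ 0)^2 + (ξ 1)^2 + (ξ 2)^2)^2 * (A' 0) := by
      linear_combination ((-1/4 : ℝ)*(ξ 0)*(ξ 2)*(ξ 2) + (-1/2 : ℝ)*(ξ 0)*(ξ 1)*(ξ 1) + (-3/4 : ℝ)*(ξ 0)*(ξ 0)*(ξ 0)) * e00 + ((-1/2 : ℝ)*(ξ 1)*(ξ 2)*(ξ 2) + (-1/2 : ℝ)*(ξ 1)*(ξ 1)*(ξ 1) + (-1 : ℝ)*(ξ 0)*(ξ 0)*(ξ 1)) * e01 + ((-1/2 : ℝ)*(ξ 2)*(ξ 2)*(ξ 2) + (-1/2 : ℝ)*(ξ 1)*(ξ 1)*(ξ 2) + (-1 : ℝ)*(ξ 0)*(ξ 0)*(ξ 2)) * e02 + ((1/4 : ℝ)*(ξ 0)*(ξ 2)*(ξ 2) + (-1/4 : ℝ)*(ξ 0)*(ξ 1)*(ξ 1)) * e11 + ((-1/2 : ℝ)*(ξ 0)*(ξ 1)*(ξ 2)) * e12 + ((1/2 : ℝ)*(ξ 2)*(ξ 2)*(ξ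 2) + (1/2 : ℝ)*(ξ 1)*(ξ 1)*(ξ 2) + (1/2 : ℝ)*(ξ 0)*(ξ 0)*(ξ 2)) * k1 + ((-1/2 : ℝ)*(ξ 1)*(ξ 2)*(ξ 2) + (-1/2 : ℝ)*(ξ 1)*(ξ 1)*(ξ 1) + (-1/2 : ℝ)*(ξ 0)*(ξ 0)*(ξ 1)) * k2
    have ha1 : ((ξ 0)^2 + (ξ 1)^2 + (ξ 2)^2)^2 * (A 1) = ((ξ 0)^2 + (ξ 1)^2 + (ξ 2)^2)^2 * (A' 1) := by
      linear_combination ((1/4 : ℝ)*(ξ 1)*(ξ 2)*(ξ 2) + (-1/4 : ℝ)*(ξ 0)*(ξ 0)*(ξ 1)) * e00 + ((-1/2 : ℝ)*(ξ 0)*(ξ 2)*(ξ 2) + (-1 : ℝ)*(ξ 0)*(ξ 1)*(ξ 1) + (-1/2 : ℝ)*(ξ 0)*(ξ 0)*(ξ 0)) * e01 + ((-1/2 : ℝ)*(ξ 0)*(ξ 1)*(ξ 2)) * e02 + ((-1/4 : ℝ)*(ξ 1)*(ξ 2)*(ξ 2) + (-3/4 : ℝ)*(ξ 1)*(ξ 1)*(ξ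 1) + (-1/2 : ℝ)*(ξ 0)*(ξ 0)*(ξ 1)) * e11 + ((-1/2 : ℝ)*(ξ 2)*(ξ 2)*(ξ 2) + (-1 : ℝ)*(ξ 1)*(ξ 1)*(ξ 2) + (-1/2 : ℝ)*(ξ 0)*(ξ 0)*(ξ 2)) * e12 + ((-1/2 : ℝ)*(ξ 2)*(ξ 2)*(ξ 2) + (-1/2 : ℝ)*(ξ 1)*(ξ 1)*(ξ 2) + (-1/2 : ℝ)*(ξ 0)*(ξ 0)*(ξ 2)) * k0 + ((1/2 : ℝ)*(ξ 0)*(ξ 2)*(ξ 2) + (1/2 : ℝ)*(ξ 0)*(ξ 1)*(ξ 1) + (1/2 : ℝ)*(ξ 0)*(ξ 0)*(ξ 0)) * k2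
    have ha2 : ((ξ 0)^2 + (ξ 1)^2 + (ξ 2)^2)^2 * (A 2) = ((ξ 0)^2 + (ξ 1)^2 + (ξ 2)^2)^2 * (A' 2) := by
      linear_combination ((3/4 : ℝ)*(ξ 2)*(ξ 2)*(ξ 2) + (1/2 : ℝ)*(ξ 1)*(ξ 1)*(ξ 2) + (1/4 : ℝ)*(ξ 0)*(ξ 0)*(ξ 2)) * e00 + ((-1/2 : ℝ)*(ξ 0)*(ξ 1)*(ξ 2)) * e01 + ((-1 : ℝ)*(ξ 0)*(ξ 2)*(ξ 2) + (-1/2 : ℝ)*(ξ 0)*(ξ 1)*(ξ 1) + (-1/2 : ℝ)*(ξ 0)*(ξ 0)*(ξ 0)) * e02 + ((3/4 : ℝ)*(ξ 2)*(ξ 2)*(ξ 2) + (1/4 : ℝ)*(ξ 1)*(ξ 1)*(ξ 2) + (1/2 : ℝ)*(ξ 0)*(ξ 0)*(ξ 2)) * e11 + ((-1 : ℝ)*(ξ 1)*(ξ 2)*(ξ 2) + (-1/2 : ℝ)*(ξ 1)*(ξ 1)*(ξ 1) + (-1/2 : ℝ)*(ξ 0)*(ξ 0)*(ξ 1)) *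 e12 + ((1/2 : ℝ)*(ξ 1)*(ξ 2)*(ξ 2) + (1/2 : ℝ)*(ξ 1)*(ξ 1)*(ξ 1) + (1/2 : ℝ)*(ξ 0)*(ξ 0)*(ξ 1)) * k0 + ((-1/2 : ℝ)*(ξ 0)*(ξ 2)*(ξ 2) + (-1/2 : ℝ)*(ξ 0)*(ξ 1)*(ξ 1) + (-1/2 : ℝ)*(ξ 0)*(ξ 0)*(ξ 0)) * k1
    have gf00 := hcancel _ _ hf00
    have gf01 := hcancel _ _ hf01
    have gf02 := hcancel _ _ hf02
    have gf11 := hcancel _ _ hf11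
    have gf12 := hcancel _ _ hf12
    have gf10 : F 1 0 = F' 1 0 := by rw [d10, d10']; exact gf01
    have gf20 : F 2 0 = F' 2 0 := by rw [d20, d20']; exact gf02
    have gf21 : F 2 1 = F' 2 1 := by rw [d21, d21']; exact gf12
    have gf22 : F 2 2 = F' 2 2 := by rw [d22, d22', gf00, gf11]
    have ga0 := hcancel _ _ ha0
    have ga1 := hcancel _ _ ha1
    have ga2 := hcancel _ _ ha2
    refine ⟨?_, ?_⟩
    · funext a b
      fin_cases a <;> fin_cases b <;>
        first
          | exact gf00 | exact gf01 | exact gf02 | exact gf10 | exact gf11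
          | exact gf12 | exact gf20 | exact gf21 | exact gf22
    · funext a
      fin_cases a <;> first | exact ga0 | exact ga1 | exact ga2
  · intro G B hG htG
    have g10 : G 1 0 = G 0 1 := hG 1 0
    have g20 : G 2 0 = G 0 2 := hG 2 0
    have g21 : G 2 1 = G 1 2 := hG 2 1
    have g22 : G 2 2 = -G 0 0 - G 1 1 := by
      simp only [Fin.sum_univ_three] at htG; linarith
    obtain ⟨n00, hn00⟩ : ∃ x:ℝ, x = (-1/2 : ℝ)*(ξ 2)*(ξ 2)*(ξ 2)*(B 2) + (-1/2 : ℝ)*(ξ 2)*(ξ 2)*(ξ 2)*(G 0 1) + (-1/2 : ℝ)*(ξ 1)*(ξ 2)*(ξ 2)*(B 1) + (1/2 : ℝ)*(ξ 1)*(ξ 2)*(ξ 2)*(G 0 2) + (-1/2 : ℝ)*(ξ 1)*(ξ 1)*(ξ 2)*(B 2) + (-1/2 : ℝ)*(ξ 1)*(ξ 1)*(ξ 2)*(G 0 1) + (-1/2 : ℝ)*(ξ 1)*(ξ 1)*(ξ 1)*(B 1) + (1/2 : ℝ)*(ξ 1)*(ξ 1)*(ξ 1)*(G 0 2) + (1/2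 : ℝ)*(ξ 0)*(ξ 2)*(ξ 2)*(B 0) + (-1/2 : ℝ)*(ξ 0)*(ξ 2)*(ξ 2)*(G 1 2) + (-1 : ℝ)*(ξ 0)*(ξ 1)*(ξ 2)*(G 1 1) + (-1/2 : ℝ)*(ξ 0)*(ξ 1)*(ξ 2)*(G 0 0) + (1/2 : ℝ)*(ξ 0)*(ξ 1)*(ξ 1)*(B 0) + (1/2 : ℝ)*(ξ 0)*(ξ 1)*(ξ 1)*(G 1 2) + (-1 : ℝ)*(ξ 0)*(ξ 0)*(ξ 2)*(G 0 1) + (1 : ℝ)*(ξ 0)*(ξ 0)*(ξ 1)*(G 0 2) + (1 : ℝ)*(ξ 0)*(ξ 0)*(ξ 0)*(B 0) := ⟨_, rfl⟩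
    obtain ⟨n01, hn01⟩ : ∃ x:ℝ, x = (-1/4 : ℝ)*(ξ 2)*(ξ 2)*(ξ 2)*(G 1 1) + (1/4 : ℝ)*(ξ 2)*(ξ 2)*(ξ 2)*(G 0 0) + (1/2 : ℝ)*(ξ 1)*(ξ 2)*(ξ 2)*(B 0) + (-3/4 : ℝ)*(ξ 1)*(ξ 1)*(ξ 2)*(G 1 1) + (1/2 : ℝ)*(ξ 1)*(ξ 1)*(ξ 1)*(B 0) + (1/2 : ℝ)*(ξ 1)*(ξ 1)*(ξ 1)*(G 1 2) + (1/2 : ℝ)*(ξ 0)*(ξ 2)*(ξ 2)*(B 1) + (1/2 : ℝ)*(ξ 0)*(ξ 1)*(ξ 2)*(B 2) + (1 : ℝ)*(ξ 0)*(ξ 1)*(ξ 1)*(B 1) + (3/4 : ℝ)*(ξ 0)*(ξ 0)*(ξ 2)*(G 0 0) + (1 : ℝ)*(ξ 0)*(ξ 0)*(ξ 1)*(B 0) + (1/2 : ℝ)*(ξ 0)*(ξ 0)*(ξ 0)*(B 1) + (-1/2 : ℝ)*(ξ 0)*(ξ 0)*(ξ 0)*(G 0 2) := ⟨_, rfl⟩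
    obtain ⟨n02, hn02⟩ : ∃ x:ℝ, x = (1/2 : ℝ)*(ξ 2)*(ξ 2)*(ξ 2)*(B 0) + (-1/2 : ℝ)*(ξ 2)*(ξ 2)*(ξ 2)*(G 1 2) + (-3/4 : ℝ)*(ξ 1)*(ξ 2)*(ξ 2)*(G 1 1) + (-3/4 : ℝ)*(ξ 1)*(ξ 2)*(ξ 2)*(G 0 0) + (1/2 : ℝ)*(ξ 1)*(ξ 1)*(ξ 2)*(B 0) + (-1/4 : ℝ)*(ξ 1)*(ξ 1)*(ξ 1)*(G 1 1) + (-1/2 : ℝ)*(ξ 1)*(ξ 1)*(ξ 1)*(G 0 0) + (1 : ℝ)*(ξ 0)*(ξ 2)*(ξ 2)*(B 2) + (1/2 : ℝ)*(ξ 0)*(ξ 1)*(ξ 2)*(B 1) + (1/2 : ℝ)*(ξ 0)*(ξ 1)*(ξ 1)*(B 2) + (1 : ℝ)*(ξ 0)*(ξ 0)*(ξ 2)*(B 0) + (-3/4 : ℝ)*(ξ 0)*(ξ 0)*(ξ 1)*(G 0 0) + (1/2 : ℝ)*(ξ 0)*(ξ 0)*(ξ 0)*(B 2) + (1/2 : ℝ)*(ξ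 0)*(ξ 0)*(ξ 0)*(G 0 1) := ⟨_, rfl⟩
    obtain ⟨n11, hn11⟩ : ∃ x:ℝ, x = (-1/2 : ℝ)*(ξ 2)*(ξ 2)*(ξ 2)*(B 2) + (1/2 : ℝ)*(ξ 2)*(ξ 2)*(ξ 2)*(G 0 1) + (1/2 : ℝ)*(ξ 1)*(ξ 2)*(ξ 2)*(B 1) + (1/2 : ℝ)*(ξ 1)*(ξ 2)*(ξ 2)*(G 0 2) + (1 : ℝ)*(ξ 1)*(ξ 1)*(ξ 2)*(G 0 1) + (1 : ℝ)*(ξ 1)*(ξ 1)*(ξ 1)*(B 1) + (-1/2 : ℝ)*(ξ 0)*(ξ 2)*(ξ 2)*(B 0) + (-1/2 : ℝ)*(ξ 0)*(ξ 2)*(ξ 2)*(G 1 2) + (1/2 : ℝ)*(ξ 0)*(ξ 1)*(ξ 2)*(G 1 1) + (1 : ℝ)*(ξ 0)*(ξ 1)*(ξ 2)*(G 0 0) + (-1 : ℝ)*(ξ 0)*(ξ 1)*(ξ 1)*(G 1 2) + (-1/2 : ℝ)*(ξ 0)*(ξ 0)*(ξ 2)*(B 2) + (1/2 : ℝ)*(ξ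 0)*(ξ 0)*(ξ 2)*(G 0 1) + (1/2 : ℝ)*(ξ 0)*(ξ 0)*(ξ 1)*(B 1) + (-1/2 : ℝ)*(ξ 0)*(ξ 0)*(ξ 1)*(G 0 2) + (-1/2 : ℝ)*(ξ 0)*(ξ 0)*(ξ 0)*(B 0) + (-1/2 : ℝ)*(ξ 0)*(ξ 0)*(ξ 0)*(G 1 2) := ⟨_, rfl⟩
    obtain ⟨n12, hn12⟩ : ∃ x:ℝ, x = (1/2 : ℝ)*(ξ 2)*(ξ 2)*(ξ 2)*(B 1) + (1/2 : ℝ)*(ξ 2)*(ξ 2)*(ξ 2)*(G 0 2) + (1 : ℝ)*(ξ 1)*(ξ 2)*(ξ 2)*(B 2) + (1 : ℝ)*(ξ 1)*(ξ 1)*(ξ 2)*(B 1) + (1/2 : ℝ)*(ξ 1)*(ξ 1)*(ξ 1)*(B 2) + (-1/2 : ℝ)*(ξ 1)*(ξ 1)*(ξ 1)*(G 0 1) + (3/4 : ℝ)*(ξ 0)*(ξ 2)*(ξ 2)*(G 1 1) + (3/4 : ℝ)*(ξ 0)*(ξ 2)*(ξ 2)*(G 0 0) + (1/2 : ℝ)*(ξ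 0)*(ξ 1)*(ξ 2)*(B 0) + (3/4 : ℝ)*(ξ 0)*(ξ 1)*(ξ 1)*(G 1 1) + (1/2 : ℝ)*(ξ 0)*(ξ 0)*(ξ 2)*(B 1) + (1/2 : ℝ)*(ξ 0)*(ξ 0)*(ξ 1)*(B 2) + (1/2 : ℝ)*(ξ 0)*(ξ 0)*(ξ 0)*(G 1 1) + (1/4 : ℝ)*(ξ 0)*(ξ 0)*(ξ 0)*(G 0 0) := ⟨_, rfl⟩
    obtain ⟨m0, hm0⟩ : ∃ x:ℝ, x = (1/2 : ℝ)*(ξ 2)*(ξ 2)*(ξ 2)*(B 1) + (-1/2 : ℝ)*(ξ 2)*(ξ 2)*(ξ 2)*(G 0 2) + (-1/2 : ℝ)*(ξ 1)*(ξ 2)*(ξ 2)*(B 2) + (-1/2 : ℝ)*(ξ 1)*(ξ 2)*(ξ 2)*(G 0 1) + (1/2 : ℝ)*(ξ 1)*(ξ 1)*(ξ 2)*(B 1) + (-1/2 : ℝ)*(ξ 1)*(ξ 1)*(ξ 2)*(G 0 2) + (-1/2 : ℝ)*(ξ 1)*(ξ 1)*(ξ 1)*(B 2) + (-1/2 : ℝ)*(ξ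 1)*(ξ 1)*(ξ 1)*(G 0 1) + (1/4 : ℝ)*(ξ 0)*(ξ 2)*(ξ 2)*(G 1 1) + (-1/4 : ℝ)*(ξ 0)*(ξ 2)*(ξ 2)*(G 0 0) + (-1/2 : ℝ)*(ξ 0)*(ξ 1)*(ξ 2)*(G 1 2) + (-1/4 : ℝ)*(ξ 0)*(ξ 1)*(ξ 1)*(G 1 1) + (-1/2 : ℝ)*(ξ 0)*(ξ 1)*(ξ 1)*(G 0 0) + (1/2 : ℝ)*(ξ 0)*(ξ 0)*(ξ 2)*(B 1) + (-1 : ℝ)*(ξ 0)*(ξ 0)*(ξ 2)*(G 0 2) + (-1/2 : ℝ)*(ξ 0)*(ξ 0)*(ξ 1)*(B 2) + (-1 : ℝ)*(ξ 0)*(ξ 0)*(ξ 1)*(G 0 1) + (-3/4 : ℝ)*(ξ 0)*(ξ 0)*(ξ 0)*(G 0 0) := ⟨_, rfl⟩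
    obtain ⟨m1, hm1⟩ : ∃ x:ℝ, x = (-1/2 : ℝ)*(ξ 2)*(ξ 2)*(ξ 2)*(B 0) + (-1/2 : ℝ)*(ξ 2)*(ξ 2)*(ξ 2)*(G 1 2) + (-1/4 : ℝ)*(ξ 1)*(ξ 2)*(ξ 2)*(G 1 1) + (1/4 : ℝ)*(ξ 1)*(ξ 2)*(ξ 2)*(G 0 0) + (-1/2 : ℝ)*(ξ 1)*(ξ 1)*(ξ 2)*(B 0) + (-1 : ℝ)*(ξ 1)*(ξ 1)*(ξ 2)*(G 1 2) + (-3/4 : ℝ)*(ξ 1)*(ξ 1)*(ξ 1)*(G 1 1) + (1/2 : ℝ)*(ξ 0)*(ξ 2)*(ξ 2)*(B 2) + (-1/2 : ℝ)*(ξ 0)*(ξ 2)*(ξ 2)*(G 0 1) + (-1/2 : ℝ)*(ξ 0)*(ξ 1)*(ξ 2)*(G 0 2) + (1/2 : ℝ)*(ξ 0)*(ξ 1)*(ξ 1)*(B 2) + (-1 : ℝ)*(ξ 0)*(ξ 1)*(ξ 1)*(G 0 1) + (-1/2 : ℝ)*(ξ 0)*(ξ 0)*(ξ 2)*(B 0)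 + (-1/2 : ℝ)*(ξ 0)*(ξ 0)*(ξ 2)*(G 1 2) + (-1/2 : ℝ)*(ξ 0)*(ξ 0)*(ξ 1)*(G 1 1) + (-1/4 : ℝ)*(ξ 0)*(ξ 0)*(ξ 1)*(G 0 0) + (1/2 : ℝ)*(ξ 0)*(ξ 0)*(ξ 0)*(B 2) + (-1/2 : ℝ)*(ξ 0)*(ξ 0)*(ξ 0)*(G 0 1) := ⟨_, rfl⟩
    obtain ⟨m2, hm2⟩ : ∃ x:ℝ, x = (3/4 : ℝ)*(ξ 2)*(ξ 2)*(ξ 2)*(G 1 1) + (3/4 : ℝ)*(ξ 2)*(ξ 2)*(ξ 2)*(G 0 0) + (1/2 : ℝ)*(ξ 1)*(ξ 2)*(ξ 2)*(B 0) + (-1 : ℝ)*(ξ 1)*(ξ 2)*(ξ 2)*(G 1 2) + (1/4 : ℝ)*(ξ 1)*(ξ 1)*(ξ 2)*(G 1 1) + (1/2 : ℝ)*(ξ 1)*(ξ 1)*(ξ 2)*(G 0 0) + (1/2 : ℝ)*(ξ 1)*(ξ 1)*(ξ 1)*(B 0) + (-1/2 : ℝ)*(ξ 1)*(ξ 1)*(ξ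 1)*(G 1 2) + (-1/2 : ℝ)*(ξ 0)*(ξ 2)*(ξ 2)*(B 1) + (-1 : ℝ)*(ξ 0)*(ξ 2)*(ξ 2)*(G 0 2) + (-1/2 : ℝ)*(ξ 0)*(ξ 1)*(ξ 2)*(G 0 1) + (-1/2 : ℝ)*(ξ 0)*(ξ 1)*(ξ 1)*(B 1) + (-1/2 : ℝ)*(ξ 0)*(ξ 1)*(ξ 1)*(G 0 2) + (1/2 : ℝ)*(ξ 0)*(ξ 0)*(ξ 2)*(G 1 1) + (1/4 : ℝ)*(ξ 0)*(ξ 0)*(ξ 2)*(G 0 0) + (1/2 : ℝ)*(ξ 0)*(ξ 0)*(ξ 1)*(B 0) + (-1/2 : ℝ)*(ξ 0)*(ξ 0)*(ξ 1)*(G 1 2) + (-1/2 : ℝ)*(ξ 0)*(ξ 0)*(ξ 0)*(B 1) + (-1/2 : ℝ)*(ξ 0)*(ξ 0)*(ξ 0)*(G 0 2) := ⟨_, rfl⟩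
    refine ⟨![![n00/(((ξ 0)^2 + (ξ 1)^2 + (ξ 2)^2)^2), n01/(((ξ 0)^2 + (ξ 1)^2 + (ξ 2)^2)^2), n02/(((ξ 0)^2 + (ξ 1)^2 + (ξ 2)^2)^2)], ![n01/(((ξ 0)^2 + (ξ 1)^2 + (ξ 2)^2)^2), n11/(((ξ 0)^2 + (ξ 1)^2 + (ξ 2)^2)^2), n12/(((ξ 0)^2 + (ξ 1)^2 + (ξ 2)^2)^2)],
      ![n02/(((ξ 0)^2 + (ξ 1)^2 + (ξ 2)^2)^2), n12/(((ξ 0)^2 + (ξ 1)^2 + (ξ 2)^2)^2), (-n00-n11)/(((ξ 0)^2 + (ξ 1)^2 + (ξ 2)^2)^2)]], ![m0/(((ξ 0)^2 + (ξ 1)^2 + (ξ 2)^2)^2), m1/(((ξ 0)^2 + (ξ 1)^2 + (ξ 2)^2)^2), m2/(((ξ 0)^2 + (ξ 1)^2 + (ξ 2)^2)^2)], ?_, ?_, ?_, ?_⟩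
    · intro a b
      fin_cases a <;> fin_cases b <;>
        simp only [finmk_zero, finmk_one, finmk_two, Matrix.cons_val_zero, Matrix.cons_val_one, Matrix.head_cons,
          Matrix.cons_val_two, Matrix.tail_cons, Matrix.head_fin_const]
    · simp only [Fin.sum_univ_three, Matrix.cons_val_zero, Matrix.cons_val_one,
        Matrix.head_cons, Matrix.cons_val_two, Matrix.tail_cons, Matrix.head_fin_const]
      ring
    · intro a b
      fin_cases a <;> fin_cases b <;>
        (simp only [finmk_zero, finmk_one, finmk_two, symb1, epsSym, kd, Fin.sum_univ_three, Matrix.cons_val_zero,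
          Matrix.cons_val_one, Matrix.head_cons, Matrix.cons_val_two, Matrix.tail_cons,
          Matrix.head_fin_const, Fin.isValue, g10, g20, g21, g22]
         try norm_num [Fin.ext_iff]
         field_simp
         subst hn00 hn01 hn02 hn11 hn12 hm0 hm1 hm2
         ring1)
    · intro a
      fin_cases a <;>
        (simp only [finmk_zero, finmk_one, finmk_two, symb2, epsSym, Fin.sum_univ_three, Matrix.cons_val_zero,
          Matrix.cons_val_one, Matrix.head_cons, Matrix.cons_val_two, Matrix.tail_cons,
          Matrix.head_fin_const, Fin.isValue]
         try norm_num [Fin.ext_iff]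
         field_simp
         subst hn00 hn01 hn02 hn11 hn12 hm0 hm1 hm2
         ring1)
end
end
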